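/- arXiv:2008.12637 — 2 statements merged into one kernel-verified Lean document; each statement's English description precedes it below -/
import Mathlib

section
/- For the SAV reformulated system φ_t = -W, W = G²φ + (R/√(F₁(φ))) N'(φ), R_t = ⟨N'(φ)/(2√(F₁(φ))), φ_t⟩, the modified energy E(t) = (1/2)‖Gφ‖² + R² − C₁ satisfies dE/dt = -‖W‖² ≤ 0. -/
/-- For the SAV-reformulated system
`φ_t = -W`, `W = G²φ + (R/√F₁(φ)) N'(φ)`, `R_t = ⟨N'(φ)/(2√F₁(φ)), φ_t⟩`,
the modified energy `E(t) = ½‖Gφ‖² + R² − C₁` satisfies `dE/dt = -‖W‖² ≤ 0`. -/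
theorem SAV_energy_dissipation
    {H : Type*} [NormedAddCommGroup H] [InnerProductSpace ℝ H]
    (G : H →L[ℝ] H) (hG : ∀ x y : H, (inner ℝ (G x) y : ℝ) = inner ℝ x (G y))
    (N' : H → H) (F₁ : H → ℝ) (hF₁ : ∀ x, 0 < F₁ x) (C₁ : ℝ)
    (φ φt W : ℝ → H) (R : ℝ → ℝ)
    (hφ : ∀ t, HasDerivAt φ (φt t) t)
    (hW : ∀ t, W t = G (G (φ t)) + (R t / Real.sqrt (F₁ (φ t))) • N' (φ t))
    (hflow : ∀ t, φt t = -W t)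
    (hR : ∀ t, HasDerivAt R
      ((inner ℝ ((2 * Real.sqrt (F₁ (φ t)))⁻¹ • N' (φ t)) (φt t) : ℝ)) t)
    (t : ℝ) :
    HasDerivAt (fun s => (1 / 2) * ‖G (φ s)‖ ^ 2 + (R s) ^ 2 - C₁) (-‖W t‖ ^ 2) t
      ∧ -‖W t‖ ^ 2 ≤ 0 := by
  constructor
  · have hGφ : HasDerivAt (fun s => G (φ s)) (G (φt t)) t :=
      by simpa [Function.comp_def] using (G.hasFDerivAt.comp t (hφ t).hasFDerivAt).hasDerivAt
    have hinner : HasDerivAt (fun s => (inner ℝ (G (φ s)) (G (φ s)) : ℝ))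
        ((inner ℝ (G (φ t)) (G (φt t)) : ℝ) + inner ℝ (G (φt t)) (G (φ t))) t :=
      hGφ.inner ℝ hGφ
    have h1 : HasDerivAt (fun s => (1 / 2) * ‖G (φ s)‖ ^ 2)
        ((inner ℝ (G (φ t)) (G (φt t)) : ℝ)) t := by
      have := hinner.const_mul (1 / 2 : ℝ)
      have heq : (1 / 2 : ℝ) * ((inner ℝ (G (φ t)) (G (φt t)) : ℝ)
          + inner ℝ (G (φt t)) (G (φ t))) = inner ℝ (G (φ t)) (G (φt t)) := by
        rw [real_inner_comm (G (φt t))]; ring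
      rw [heq] at this
      refine this.congr_of_eventuallyEq ?_
      filter_upwards with s
      rw [real_inner_self_eq_norm_sq]
    have h2 : HasDerivAt (fun s => (R s) ^ 2)
        (2 * R t * (inner ℝ ((2 * Real.sqrt (F₁ (φ t)))⁻¹ • N' (φ t)) (φt t) : ℝ)) t := by
      simpa [Pi.pow_def] using ((hR t).pow 2)
    have hsum := (h1.add h2).sub_const C₁
    have key : (inner ℝ (G (φ t)) (G (φt t)) : ℝ)
        + 2 * R t * (inner ℝ ((2 * Real.sqrt (F₁ (φ t)))⁻¹ • N' (φ t)) (φt t) : ℝ)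
        = -‖W t‖ ^ 2 := by
      have hs : Real.sqrt (F₁ (φ t)) ≠ 0 := (Real.sqrt_pos.mpr (hF₁ (φ t))).ne'
      rw [real_inner_smul_left, ← hG (G (φ t)) (φt t)]
      have : (inner ℝ (G (G (φ t))) (φt t) : ℝ)
          + 2 * R t * ((2 * Real.sqrt (F₁ (φ t)))⁻¹ * inner ℝ (N' (φ t)) (φt t))
          = inner ℝ (G (G (φ t)) + (R t / Real.sqrt (F₁ (φ t))) • N' (φ t)) (φt t) := by
        rw [inner_add_left, real_inner_smul_left]
        field_simp
      rw [this, ← hW t, hflow t, inner_neg_right, real_inner_self_eq_norm_sq]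
    rwa [key] at hsum
  · simp [neg_nonpos]
end

section
/- The semi-discrete SAV/Crank-Nicolson scheme satisfies the discrete energy identity (1/2)(‖Gφ^{n+1}‖² − ‖Gφⁿ‖²) + (R^{n+1})² − (Rⁿ)² = −‖W^{n+1/2}‖² ≤ 0; in particular the modified discrete energy F^n = (1/2)‖Gφⁿ‖² + (Rⁿ)² − C₁ is nonincreasing. -/
/-- The semi-discrete SAV/Crank–Nicolson scheme satisfies the discrete
energy identity
`½(‖Gφ^{n+1}‖² − ‖Gφⁿ‖²) + (R^{n+1})² − (Rⁿ)² = −τ‖W^{n+1/2}‖² ≤ 0`;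
in particular the modified discrete energy `Fⁿ = ½‖Gφⁿ‖² + (Rⁿ)² − C₁` is nonincreasing. -/
theorem SAV_CN_discrete_energy
    {H : Type*} [NormedAddCommGroup H] [InnerProductSpace ℝ H]
    (G : H →L[ℝ] H) (hG : ∀ x y : H, (inner ℝ (G x) y : ℝ) = inner ℝ x (G y))
    (τ : ℝ) (hτ : 0 < τ) (C₁ : ℝ)
    (u W φn φn1 : H) (Rn Rn1 : ℝ)
    (h1 : φn1 - φn = (-τ) • W)
    (h2 : W = G (G ((2 : ℝ)⁻¹ • (φn1 + φn))) + ((Rn1 + Rn) / 2) • u)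
    (h3 : Rn1 - Rn = (1 / 2) * (inner ℝ u (φn1 - φn) : ℝ)) :
    ((1 / 2) * (‖G φn1‖ ^ 2 - ‖G φn‖ ^ 2) + Rn1 ^ 2 - Rn ^ 2 = -(τ * ‖W‖ ^ 2))
      ∧ (1 / 2) * ‖G φn1‖ ^ 2 + Rn1 ^ 2 - C₁ ≤ (1 / 2) * ‖G φn‖ ^ 2 + Rn ^ 2 - C₁ := by
  have hWd : (inner ℝ W (φn1 - φn) : ℝ) = -(τ * ‖W‖ ^ 2) := by
    rw [h1, real_inner_smul_right, real_inner_self_eq_norm_sq]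
    ring
  have hG2 : (inner ℝ (G (G ((2 : ℝ)⁻¹ • (φn1 + φn)))) (φn1 - φn) : ℝ)
      = (1 / 2) * (‖G φn1‖ ^ 2 - ‖G φn‖ ^ 2) := by
    rw [hG]
    simp only [map_smul, map_add, map_sub, real_inner_smul_left, inner_add_left,
      inner_sub_right, real_inner_self_eq_norm_sq, real_inner_comm (G φn1) (G φn)]
    ring
  have hkey : (inner ℝ W (φn1 - φn) : ℝ)
      = (1 / 2) * (‖G φn1‖ ^ 2 - ‖G φn‖ ^ 2)
        + ((Rn1 + Rn) / 2) * (inner ℝ u (φn1 - φn) : ℝ) := by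
    rw [h2, inner_add_left, hG2, real_inner_smul_left]
  have hR : Rn1 ^ 2 - Rn ^ 2 = ((Rn1 + Rn) / 2) * (inner ℝ u (φn1 - φn) : ℝ) := by
    linear_combination (Rn1 + Rn) * h3
  have hid : (1 / 2) * (‖G φn1‖ ^ 2 - ‖G φn‖ ^ 2) + Rn1 ^ 2 - Rn ^ 2 = -(τ * ‖W‖ ^ 2) := by
    linarith [hkey, hWd, hR]
  refine ⟨hid, ?_⟩
  nlinarith [sq_nonneg ‖W‖, hτ]
end
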